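/- Fix a, b ∈ ℝ \ {0} with a ≠ b, and let G₇ be the group whose underlying set is ℝ⁵ with multiplication (x₁,x₂,x₃,x₄,x₅)·(y₁,y₂,y₃,y₄,y₅) = (y₁+x₁e^{a y₃}, y₂+x₂e^{b y₃}, x₃+y₃, x₄+y₄, x₅+y₅). Let H = { (x, y, 0, x+y, 0) : x, y ∈ ℝ } and A = { (2−e^{b k₁}−e^{a k₁}, 2−e^{b k₁}−e^{a k₁}, k₁, k₂, k₃) : k₁, k₂, k₃ ∈ ℝ }. Then H is a subgroup of G₇, A is a left transversal to H in G₇, a⁻¹b⁻¹ab ∈ H for all a, b ∈ A, and the subgroup of G₇ generated by A is all of G₇. -/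

import Mathlib

/-- The underlying set `ℝ⁵` of the group `G₇` (with fixed parameters `p, q`). -/
@[ext] structure G7 (p q : ℝ) where
  x1 : ℝ
  x2 : ℝ
  x3 : ℝ
  x4 : ℝ
  x5 : ℝ

namespace G7

variable (p q : ℝ)

/-- `(x₁,…,x₅)·(y₁,…,y₅) = (y₁+x₁e^{p y₃}, y₂+x₂e^{q y₃}, x₃+y₃, x₄+y₄, x₅+y₅)`. -/
noncomputable def gmul (u v : G7 p q) : G7 p q :=
  ⟨v.x1 + u.x1 * Real.exp (p * v.x3), v.x2 + u.x2 * Real.exp (q * v.x3),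
    u.x3 + v.x3, u.x4 + v.x4, u.x5 + v.x5⟩

/-- The identity element. -/
def gone : G7 p q := ⟨0, 0, 0, 0, 0⟩

/-- Inversion. -/
noncomputable def ginv (u : G7 p q) : G7 p q :=
  ⟨-u.x1 * Real.exp (p * -u.x3), -u.x2 * Real.exp (q * -u.x3), -u.x3, -u.x4, -u.x5⟩

noncomputable instance : Group (G7 p q) where
  mul := gmul p q
  one := gone p q
  inv := ginv p q
  mul_assoc u v w := by
    show gmul p q (gmul p q u v) w = gmul p q u (gmul p q v w)
    simp only [gmul, mk.injEq, mul_add, Real.exp_add]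
    refine ⟨by ring, by ring, by ring, by ring, by ring⟩
  one_mul u := by
    show gmul p q (gone p q) u = u
    simp [gmul, gone]
  mul_one u := by
    show gmul p q u (gone p q) = u
    simp [gmul, gone]
  inv_mul_cancel u := by
    show gmul p q (ginv p q u) u = gone p q
    have key1 : Real.exp (p * -u.x3) * Real.exp (p * u.x3) = 1 := by
      rw [← Real.exp_add, show p * -u.x3 + p * u.x3 = 0 by ring, Real.exp_zero]
    have key2 : Real.exp (q * -u.x3) * Real.exp (q * u.x3) = 1 := by
      rw [← Real.exp_add, show q * -u.x3 + q * u.x3 = 0 by ring, Real.exp_zero]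
    simp only [gmul, ginv, gone, mk.injEq]
    refine ⟨by linear_combination (-u.x1) * key1, by linear_combination (-u.x2) * key2,
      by ring, by ring, by ring⟩

end G7

/-- `A` is a left transversal to `S` in the ambient group: every element has a
unique factorization `k = a * s` with `a ∈ A`, `s ∈ S`. -/
def IsLeftTransversal {G : Type*} [Group G] (A S : Set G) : Prop :=
  ∀ k : G, ∃! x : G × G, x.1 ∈ A ∧ x.2 ∈ S ∧ k = x.1 * x.2

namespace G7aux

variable {p q : ℝ}

lemma mk_mul (a b c d e a' b' c' d' e' : ℝ) :
    (⟨a,b,c,d,e⟩ : G7 p q) * ⟨a',b',c',d',e'⟩ =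
      ⟨a' + a*Real.exp (p*c'), b' + b*Real.exp (q*c'), c+c', d+d', e+e'⟩ := rfl

lemma one_def : (1 : G7 p q) = ⟨0, 0, 0, 0, 0⟩ := rfl

lemma mk_inv (a b c d e : ℝ) :
    (⟨a,b,c,d,e⟩ : G7 p q)⁻¹ =
      ⟨-a*Real.exp (p*(-c)), -b*Real.exp (q*(-c)), -c, -d, -e⟩ := rfl

def Aset (p q : ℝ) : Set (G7 p q) :=
  {g : G7 p q | ∃ k1 k2 k3 : ℝ,
      g = ⟨2 - Real.exp (q * k1) - Real.exp (p * k1),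
            2 - Real.exp (q * k1) - Real.exp (p * k1), k1, k2, k3⟩}

lemma exp_conv (L : ℝ) (hL : L ≠ 0) (x y a b : ℝ) (hxy : x ≠ y) (ha : 0 < a) (hb : 0 < b)
    (hab : a + b = 1) : Real.exp ((a*x + b*y) * L) < a * Real.exp (x*L) + b * Real.exp (y*L) := by
  have h := strictConvexOn_exp.2 (Set.mem_univ (x*L)) (Set.mem_univ (y*L))
    (fun h => hxy (mul_right_cancel₀ hL h)) ha hb hab
  rw [show (a*x + b*y) * L = a • (x*L) + b • (y*L) by simp [smul_eq_mul]; ring]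
  exact h

lemma key_ne (c : ℝ) (h0 : c ≠ 0) (h1 : c ≠ 1) :
    Real.exp (c * Real.log (1/2)) + Real.exp (c * Real.log (3/2)) ≠ 2 := by
  have hL1 : Real.log (1/2) ≠ 0 := by
    rw [show (1/2 : ℝ) = 2⁻¹ by norm_num, Real.log_inv]
    have : 0 < Real.log 2 := Real.log_pos (by norm_num)
    linarith
  have hL2 : Real.log (3/2) ≠ 0 := by
    have : 0 < Real.log (3/2) := Real.log_pos (by norm_num)
    linarith
  have e1 : Real.exp (Real.log (1/2)) = 1/2 := Real.exp_log (by norm_num)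
  have e2 : Real.exp (Real.log (3/2)) = 3/2 := Real.exp_log (by norm_num)
  intro heq
  rcases lt_trichotomy c 0 with hc | hc | hc
  · have hcn : (1:ℝ) - c ≠ 0 := by linarith
    have ha : 0 < 1/(1-c) := by apply div_pos <;> linarith
    have hb : 0 < -c/(1-c) := by apply div_pos <;> linarith
    have hab : 1/(1-c) + -c/(1-c) = 1 := by field_simp; ring
    have hmid : (1/(1-c))*c + (-c/(1-c))*1 = 0 := by field_simp; ring
    have i1 := exp_conv (Real.log (1/2)) hL1 c 1 _ _ h1 ha hb hab
    have i2 := exp_conv (Real.log (3/2)) hL2 c 1 _ _ h1 ha hb hab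
    rw [hmid] at i1 i2
    simp only [zero_mul, Real.exp_zero, one_mul, e1, e2] at i1 i2
    have hsum : 2 < (1/(1-c)) * (Real.exp (c * Real.log (1/2)) + Real.exp (c * Real.log (3/2)))
        + (-c/(1-c)) * 2 := by rw [mul_add]; linarith
    rw [heq] at hsum
    nlinarith
  · exact h0 hc
  · rcases lt_trichotomy c 1 with hc1 | hc1 | hc1
    · have ha : 0 < 1 - c := by linarith
      have hmid : (1-c)*0 + c*1 = c := by ring
      have i1 := exp_conv (Real.log (1/2)) hL1 0 1 (1-c) c (by norm_num) ha hc (by ring)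
      have i2 := exp_conv (Real.log (3/2)) hL2 0 1 (1-c) c (by norm_num) ha hc (by ring)
      rw [hmid] at i1 i2
      simp only [zero_mul, Real.exp_zero, one_mul, mul_one, e1, e2] at i1 i2
      linarith
    · exact h1 hc1
    · have hcn : c ≠ 0 := by linarith
      have ha : 0 < 1 - 1/c := by
        have : 1/c < 1 := by rw [div_lt_one (by linarith)]; linarith
        linarith
      have hb : 0 < 1/c := by positivity
      have hmid : (1-1/c)*0 + (1/c)*c = 1 := by field_simp; ring
      have i1 := exp_conv (Real.log (1/2)) hL1 0 c _ _ (Ne.symm hcn) ha hb (by ring)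
      have i2 := exp_conv (Real.log (3/2)) hL2 0 c _ _ (Ne.symm hcn) ha hb (by ring)
      rw [hmid] at i1 i2
      simp only [zero_mul, Real.exp_zero, one_mul, mul_one, e1, e2] at i1 i2
      have hsum : 2 < (1-1/c)*2 + (1/c) * (Real.exp (c * Real.log (1/2)) + Real.exp (c * Real.log (3/2))) := by
        rw [mul_add]; linarith
      rw [heq] at hsum
      nlinarith

/-- conjugation scaling: if `(u,v,0,0,0)` is in the closure of `A`, so is
`(u e^{pr}, v e^{qr}, 0,0,0)` for every `r`. -/
lemma conj_mem (u v r : ℝ)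
    (h : (⟨u, v, 0, 0, 0⟩ : G7 p q) ∈ Subgroup.closure (Aset p q)) :
    (⟨u * Real.exp (p*r), v * Real.exp (q*r), 0, 0, 0⟩ : G7 p q) ∈
      Subgroup.closure (Aset p q) := by
  set C := Subgroup.closure (Aset p q)
  have hg : (⟨2 - Real.exp (q * (-r)) - Real.exp (p * (-r)),
      2 - Real.exp (q * (-r)) - Real.exp (p * (-r)), -r, 0, 0⟩ : G7 p q) ∈ C :=
    Subgroup.subset_closure ⟨-r, 0, 0, rfl⟩
  have hmem := mul_mem (mul_mem hg h) (inv_mem hg)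
  have heq : (⟨u * Real.exp (p*r), v * Real.exp (q*r), 0, 0, 0⟩ : G7 p q) =
      ⟨2 - Real.exp (q * (-r)) - Real.exp (p * (-r)),
      2 - Real.exp (q * (-r)) - Real.exp (p * (-r)), -r, 0, 0⟩ * ⟨u, v, 0, 0, 0⟩ *
      (⟨2 - Real.exp (q * (-r)) - Real.exp (p * (-r)),
      2 - Real.exp (q * (-r)) - Real.exp (p * (-r)), -r, 0, 0⟩ : G7 p q)⁻¹ := by
    rw [mk_mul, mk_inv, mk_mul]
    ext <;> simp <;> ring
  rw [heq]; exact hmem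

lemma axis1_mem (hp : p ≠ 0) (z1 : ℝ) (hz1 : z1 ≠ 0)
    (h : (⟨z1, 0, 0, 0, 0⟩ : G7 p q) ∈ Subgroup.closure (Aset p q)) (x : ℝ) :
    (⟨x, 0, 0, 0, 0⟩ : G7 p q) ∈ Subgroup.closure (Aset p q) := by
  set d := x / z1 with hd
  set lam := |d| + 1 with hlam
  set mu := |d| + 1 - d with hmu
  have hlam0 : 0 < lam := by positivity
  have hmu0 : 0 < mu := by
    have := abs_nonneg d
    have := le_abs_self d
    rw [hmu]; linarith
  have h1 := conj_mem (p := p) (q := q) z1 0 (Real.log lam / p) h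
  have h2 := conj_mem (p := p) (q := q) z1 0 (Real.log mu / p) h
  rw [show p * (Real.log lam / p) = Real.log lam by field_simp,
      Real.exp_log hlam0] at h1
  rw [show p * (Real.log mu / p) = Real.log mu by field_simp,
      Real.exp_log hmu0] at h2
  have hmem := mul_mem h1 (inv_mem h2)
  have heq : (⟨x, 0, 0, 0, 0⟩ : G7 p q) =
      (⟨z1 * lam, 0 * Real.exp (q * (Real.log lam / p)), 0, 0, 0⟩ : G7 p q) *
      (⟨z1 * mu, 0 * Real.exp (q * (Real.log mu / p)), 0, 0, 0⟩ : G7 p q)⁻¹ := by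
    rw [mk_inv, mk_mul]
    have hx : x = z1 * d := by rw [hd]; field_simp
    ext <;> simp <;> rw [hlam, hmu] <;> nlinarith [hx]
  rw [heq]; exact hmem

lemma axis2_mem (hq : q ≠ 0) (z2 : ℝ) (hz2 : z2 ≠ 0)
    (h : (⟨0, z2, 0, 0, 0⟩ : G7 p q) ∈ Subgroup.closure (Aset p q)) (y : ℝ) :
    (⟨0, y, 0, 0, 0⟩ : G7 p q) ∈ Subgroup.closure (Aset p q) := by
  set d := y / z2 with hd
  set lam := |d| + 1 with hlam
  set mu := |d| + 1 - d with hmu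
  have hlam0 : 0 < lam := by positivity
  have hmu0 : 0 < mu := by
    have := abs_nonneg d
    have := le_abs_self d
    rw [hmu]; linarith
  have h1 := conj_mem (p := p) (q := q) 0 z2 (Real.log lam / q) h
  have h2 := conj_mem (p := p) (q := q) 0 z2 (Real.log mu / q) h
  rw [show q * (Real.log lam / q) = Real.log lam by field_simp,
      Real.exp_log hlam0] at h1
  rw [show q * (Real.log mu / q) = Real.log mu by field_simp,
      Real.exp_log hmu0] at h2
  have hmem := mul_mem h1 (inv_mem h2)
  have heq : (⟨0, y, 0, 0, 0⟩ : G7 p q) =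
      (⟨0 * Real.exp (p * (Real.log lam / q)), z2 * lam, 0, 0, 0⟩ : G7 p q) *
      (⟨0 * Real.exp (p * (Real.log mu / q)), z2 * mu, 0, 0, 0⟩ : G7 p q)⁻¹ := by
    rw [mk_inv, mk_mul]
    have hy : y = z2 * d := by rw [hd]; field_simp
    ext <;> simp <;> rw [hlam, hmu] <;> nlinarith [hy]
  rw [heq]; exact hmem

lemma closure_top (hp : p ≠ 0) (hq : q ≠ 0) (hpq : p ≠ q) :
    Subgroup.closure (Aset p q) = ⊤ := by
  set C := Subgroup.closure (Aset p q) with hC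
  have hA : ∀ k1 k2 k3 : ℝ, (⟨2 - Real.exp (q * k1) - Real.exp (p * k1),
      2 - Real.exp (q * k1) - Real.exp (p * k1), k1, k2, k3⟩ : G7 p q) ∈ C :=
    fun k1 k2 k3 => Subgroup.subset_closure ⟨k1, k2, k3, rfl⟩
  set u0 := (1 - Real.exp (-q)) * (1 - Real.exp (q - p)) with hu0
  set v0 := (1 - Real.exp (-p)) * (1 - Real.exp (p - q)) with hv0
  have hu0ne : u0 ≠ 0 := by
    apply mul_ne_zero <;> intro hcon
    · have : Real.exp (-q) = 1 := by linarith
      rw [Real.exp_eq_one_iff] at this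
      exact hq (by linarith)
    · have : Real.exp (q - p) = 1 := by linarith
      rw [Real.exp_eq_one_iff] at this
      exact hpq (by linarith)
  have hv0ne : v0 ≠ 0 := by
    apply mul_ne_zero <;> intro hcon
    · have : Real.exp (-p) = 1 := by linarith
      rw [Real.exp_eq_one_iff] at this
      exact hp (by linarith)
    · have : Real.exp (p - q) = 1 := by linarith
      rw [Real.exp_eq_one_iff] at this
      exact hpq (by linarith)
  -- the seed element w = a(1)*a(-1)
  have hw : (⟨u0, v0, 0, 0, 0⟩ : G7 p q) ∈ C := by
    have hmem := mul_mem (hA 1 0 0) (hA (-1) 0 0)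
    rw [mk_mul] at hmem
    have heq : (⟨u0, v0, 0, 0, 0⟩ : G7 p q) =
        ⟨2 - Real.exp (q * (-1)) - Real.exp (p * (-1)) +
          (2 - Real.exp (q * 1) - Real.exp (p * 1)) * Real.exp (p * (-1)),
        2 - Real.exp (q * (-1)) - Real.exp (p * (-1)) +
          (2 - Real.exp (q * 1) - Real.exp (p * 1)) * Real.exp (q * (-1)),
        1 + -1, 0 + 0, 0 + 0⟩ := by
      ext <;> simp [hu0, hv0, mul_comm, Real.exp_neg, Real.exp_sub] <;>
        field_simp <;> ring
    rw [heq]; exact hmem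
  -- scaled versions of w
  have hw1 := conj_mem (p := p) (q := q) u0 v0 (Real.log (1/2) / q) hw
  have hw2 := conj_mem (p := p) (q := q) u0 v0 (Real.log (3/2) / q) hw
  rw [show p * (Real.log (1/2) / q) = (p/q) * Real.log (1/2) by ring,
      show q * (Real.log (1/2) / q) = Real.log (1/2) by field_simp,
      Real.exp_log (by norm_num : (0:ℝ) < 1/2)] at hw1
  rw [show p * (Real.log (3/2) / q) = (p/q) * Real.log (3/2) by ring,
      show q * (Real.log (3/2) / q) = Real.log (3/2) by field_simp,
      Real.exp_log (by norm_num : (0:ℝ) < 3/2)] at hw2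
  have hpq1 : p / q ≠ 1 := by
    intro h; apply hpq; field_simp at h; exact h
  have hqp1 : q / p ≠ 1 := by
    intro h; apply hpq; field_simp at h; exact h.symm
  set E1 := Real.exp ((p/q) * Real.log (1/2)) with hE1
  set E2 := Real.exp ((p/q) * Real.log (3/2)) with hE2
  have hz1ne : u0 * (E1 + E2 - 2) ≠ 0 :=
    mul_ne_zero hu0ne (sub_ne_zero.mpr (key_ne (p/q) (div_ne_zero hp hq) hpq1))
  have hz : (⟨u0 * (E1 + E2 - 2), 0, 0, 0, 0⟩ : G7 p q) ∈ C := by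
    have hmem := mul_mem (mul_mem (mul_mem hw1 hw2) (inv_mem hw)) (inv_mem hw)
    have heq : (⟨u0 * (E1 + E2 - 2), 0, 0, 0, 0⟩ : G7 p q) =
        (⟨u0 * E1, v0 * (1/2), 0, 0, 0⟩ : G7 p q) * ⟨u0 * E2, v0 * (3/2), 0, 0, 0⟩ *
          (⟨u0, v0, 0, 0, 0⟩ : G7 p q)⁻¹ * (⟨u0, v0, 0, 0, 0⟩ : G7 p q)⁻¹ := by
      rw [mk_inv, mk_mul, mk_mul, mk_mul]
      ext <;> simp <;> ring
    rw [heq]; exact hmem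
  -- symmetric: second axis seed
  have hw1' := conj_mem (p := p) (q := q) u0 v0 (Real.log (1/2) / p) hw
  have hw2' := conj_mem (p := p) (q := q) u0 v0 (Real.log (3/2) / p) hw
  rw [show q * (Real.log (1/2) / p) = (q/p) * Real.log (1/2) by ring,
      show p * (Real.log (1/2) / p) = Real.log (1/2) by field_simp,
      Real.exp_log (by norm_num : (0:ℝ) < 1/2)] at hw1'
  rw [show q * (Real.log (3/2) / p) = (q/p) * Real.log (3/2) by ring,
      show p * (Real.log (3/2) / p) = Real.log (3/2) by field_simp,
      Real.exp_log (by norm_num : (0:ℝ) < 3/2)] at hw2'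
  set F1 := Real.exp ((q/p) * Real.log (1/2)) with hF1
  set F2 := Real.exp ((q/p) * Real.log (3/2)) with hF2
  have hz2ne : v0 * (F1 + F2 - 2) ≠ 0 :=
    mul_ne_zero hv0ne (sub_ne_zero.mpr (key_ne (q/p) (div_ne_zero hq hp) hqp1))
  have hz' : (⟨0, v0 * (F1 + F2 - 2), 0, 0, 0⟩ : G7 p q) ∈ C := by
    have hmem := mul_mem (mul_mem (mul_mem hw1' hw2') (inv_mem hw)) (inv_mem hw)
    have heq : (⟨0, v0 * (F1 + F2 - 2), 0, 0, 0⟩ : G7 p q) =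
        (⟨u0 * (1/2), v0 * F1, 0, 0, 0⟩ : G7 p q) * ⟨u0 * (3/2), v0 * F2, 0, 0, 0⟩ *
          (⟨u0, v0, 0, 0, 0⟩ : G7 p q)⁻¹ * (⟨u0, v0, 0, 0, 0⟩ : G7 p q)⁻¹ := by
      rw [mk_inv, mk_mul, mk_mul, mk_mul]
      ext <;> simp <;> ring
    rw [heq]; exact hmem
  -- both axes are in C
  have hN1 : ∀ x : ℝ, (⟨x, 0, 0, 0, 0⟩ : G7 p q) ∈ C :=
    axis1_mem hp _ hz1ne hz
  have hN2 : ∀ y : ℝ, (⟨0, y, 0, 0, 0⟩ : G7 p q) ∈ C :=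
    axis2_mem hq _ hz2ne hz'
  -- conclude
  rw [eq_top_iff]
  intro g _
  set c := 2 - Real.exp (q * g.x3) - Real.exp (p * g.x3) with hc2
  have hmem := mul_mem (hA g.x3 g.x4 g.x5) (mul_mem (hN1 (g.x1 - c)) (hN2 (g.x2 - c)))
  have heq : g = (⟨c, c, g.x3, g.x4, g.x5⟩ : G7 p q) *
      ((⟨g.x1 - c, 0, 0, 0, 0⟩ : G7 p q) * ⟨0, g.x2 - c, 0, 0, 0⟩) := by
    rw [mk_mul, mk_mul]
    ext <;> simp <;> ring
  rw [heq]; exact hmem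

end G7aux


open G7aux in
/-- `H = {(x,y,0,x+y,0)}` is a subgroup of `G₇`; the indicated set `A` is an
`H`-connected left transversal to `H` in `G₇` and generates `G₇`. -/
theorem G7_connected_transversal (p q : ℝ) (hp : p ≠ 0) (hq : q ≠ 0) (hpq : p ≠ q) :
    ∃ H : Subgroup (G7 p q),
      (H : Set (G7 p q)) = {g : G7 p q | ∃ x y : ℝ, g = ⟨x, y, 0, x + y, 0⟩} ∧
      IsLeftTransversal {g : G7 p q | ∃ k1 k2 k3 : ℝ,
          g = ⟨2 - Real.exp (q * k1) - Real.exp (p * k1),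
                2 - Real.exp (q * k1) - Real.exp (p * k1), k1, k2, k3⟩}
        (H : Set (G7 p q)) ∧
      (∀ a ∈ {g : G7 p q | ∃ k1 k2 k3 : ℝ,
          g = ⟨2 - Real.exp (q * k1) - Real.exp (p * k1),
                2 - Real.exp (q * k1) - Real.exp (p * k1), k1, k2, k3⟩},
        ∀ b ∈ {g : G7 p q | ∃ k1 k2 k3 : ℝ,
          g = ⟨2 - Real.exp (q * k1) - Real.exp (p * k1),
                2 - Real.exp (q * k1) - Real.exp (p * k1), k1, k2, k3⟩},
          a⁻¹ * b⁻¹ * a * b ∈ H) ∧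
      Subgroup.closure {g : G7 p q | ∃ k1 k2 k3 : ℝ,
          g = ⟨2 - Real.exp (q * k1) - Real.exp (p * k1),
                2 - Real.exp (q * k1) - Real.exp (p * k1), k1, k2, k3⟩} = ⊤ := by
  refine ⟨{
    carrier := {g : G7 p q | ∃ x y : ℝ, g = ⟨x, y, 0, x + y, 0⟩}
    mul_mem' := ?_
    one_mem' := ?_
    inv_mem' := ?_ }, rfl, ?_, ?_, ?_⟩
  · rintro g g' ⟨x, y, rfl⟩ ⟨x', y', rfl⟩
    exact ⟨x + x', y + y', by rw [mk_mul]; ext <;> simp <;> ring⟩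
  · exact ⟨0, 0, by rw [one_def]; ext <;> norm_num⟩
  · rintro g ⟨x, y, rfl⟩
    exact ⟨-x, -y, by rw [mk_inv]; ext <;> simp <;> ring⟩
  · -- transversal
    intro k
    refine ⟨(⟨2 - Real.exp (q * k.x3) - Real.exp (p * k.x3),
              2 - Real.exp (q * k.x3) - Real.exp (p * k.x3), k.x3,
              k.x4 - k.x1 - k.x2 + 2 * (2 - Real.exp (q * k.x3) - Real.exp (p * k.x3)),
              k.x5⟩,
            ⟨k.x1 - (2 - Real.exp (q * k.x3) - Real.exp (p * k.x3)),
              k.x2 - (2 - Real.exp (q * k.x3) - Real.exp (p * k.x3)), 0,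
              (k.x1 - (2 - Real.exp (q * k.x3) - Real.exp (p * k.x3))) +
                (k.x2 - (2 - Real.exp (q * k.x3) - Real.exp (p * k.x3))), 0⟩),
      ⟨⟨k.x3, _, k.x5, rfl⟩, ⟨_, _, rfl⟩, by rw [mk_mul]; ext <;> simp <;> ring⟩, ?_⟩
    rintro ⟨a', h'⟩ ⟨⟨k1, k2, k3, rfl⟩, ⟨x, y, rfl⟩, hk⟩
    rw [mk_mul] at hk
    have e1 : k.x1 = x + (2 - Real.exp (q * k1) - Real.exp (p * k1)) := by
      rw [hk]; simp
    have e2 : k.x2 = y + (2 - Real.exp (q * k1) - Real.exp (p * k1)) := by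
      rw [hk]; simp
    have e3 : k.x3 = k1 := by rw [hk]; simp
    have e4 : k.x4 = k2 + (x + y) := by rw [hk]
    have e5 : k.x5 = k3 := by rw [hk]; simp
    subst e3
    refine Prod.ext ?_ ?_ <;> ext <;> simp [e1, e2, e4, e5] <;> ring
  · -- commutator condition
    rintro a ⟨s, s2, s3, rfl⟩ b ⟨t, t2, t3, rfl⟩
    have hform : (⟨2 - Real.exp (q * s) - Real.exp (p * s),
        2 - Real.exp (q * s) - Real.exp (p * s), s, s2, s3⟩ : G7 p q)⁻¹ *
        (⟨2 - Real.exp (q * t) - Real.exp (p * t),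
        2 - Real.exp (q * t) - Real.exp (p * t), t, t2, t3⟩ : G7 p q)⁻¹ *
        ⟨2 - Real.exp (q * s) - Real.exp (p * s),
        2 - Real.exp (q * s) - Real.exp (p * s), s, s2, s3⟩ *
        ⟨2 - Real.exp (q * t) - Real.exp (p * t),
        2 - Real.exp (q * t) - Real.exp (p * t), t, t2, t3⟩ =
        ⟨(2 - Real.exp (q * t) - Real.exp (p * t)) +
            (2 - Real.exp (q * s) - Real.exp (p * s)) * Real.exp (p * t) -
            (2 - Real.exp (q * t) - Real.exp (p * t)) * Real.exp (p * s) -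
            (2 - Real.exp (q * s) - Real.exp (p * s)),
          (2 - Real.exp (q * t) - Real.exp (p * t)) +
            (2 - Real.exp (q * s) - Real.exp (p * s)) * Real.exp (q * t) -
            (2 - Real.exp (q * t) - Real.exp (p * t)) * Real.exp (q * s) -
            (2 - Real.exp (q * s) - Real.exp (p * s)), 0, 0, 0⟩ := by
      rw [mk_inv, mk_inv, mk_mul, mk_mul, mk_mul]
      ext <;> simp [mul_neg, Real.exp_neg] <;>
        field_simp <;> ring
    rw [hform]
    refine ⟨(2 - Real.exp (q * t) - Real.exp (p * t)) +
            (2 - Real.exp (q * s) - Real.exp (p * s)) * Real.exp (p * t) -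
            (2 - Real.exp (q * t) - Real.exp (p * t)) * Real.exp (p * s) -
            (2 - Real.exp (q * s) - Real.exp (p * s)),
          (2 - Real.exp (q * t) - Real.exp (p * t)) +
            (2 - Real.exp (q * s) - Real.exp (p * s)) * Real.exp (q * t) -
            (2 - Real.exp (q * t) - Real.exp (p * t)) * Real.exp (q * s) -
            (2 - Real.exp (q * s) - Real.exp (p * s)), ?_⟩
    ext <;> simp <;> ring
  · exact closure_top hp hq hpq
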